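/- Let A be an abelian category with enough projectives and enough injectives, let T be a contravariantly finite tilting subcategory, and let U be a subcategory with Ext¹(U, Fac U) = 0 and T^⊥₁ ⊆ U^⊥₁. Then every U₀ ∈ U admits a short exact sequence 0 → U₀ →f T₀ → T₁ → 0 where T₀, T₁ ∈ T and f is a left (Fac T)-approximation. -/

import Mathlib

open CategoryTheory Limits Opposite

noncomputable section

universe v u

variable {C : Type u} [Category.{v} C] [Abelian C] [EnoughProjectives C]

attribute [local instance] CategoryTheory.Abelian.hasFiniteBiproducts

/-- `Fac M`: quotients of finite direct sums of objects of `M`. -/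
def Fac (M : Set C) : Set C :=
  {X | ∃ (n : ℕ) (f : Fin n → C), (∀ i, f i ∈ M) ∧
    haveI : HasBiproductsOfShape (Fin n) C := HasFiniteBiproducts.out n
    ∃ e : (⨁ f) ⟶ X, Epi e}

/-- Vanishing of `Ext¹(X, Y)`. -/
def ext1Zero (X Y : C) : Prop := Subsingleton (((Ext ℤ C 1).obj (op X)).obj Y)

/-- Vanishing of `Ext²(X, Y)`. -/
def ext2Zero (X Y : C) : Prop := Subsingleton (((Ext ℤ C 2).obj (op X)).obj Y)

/-- `v : P ⟶ V₀` is a left `M`-approximation. -/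
def IsLeftApprox (M : Set C) {P V₀ : C} (v : P ⟶ V₀) : Prop :=
  ∀ V' ∈ M, ∀ h : P ⟶ V', ∃ t : V₀ ⟶ V', v ≫ t = h

/-- `u : U₀ ⟶ X` is a right `M`-approximation. -/
def IsRightApprox (M : Set C) {U₀ X : C} (u : U₀ ⟶ X) : Prop :=
  ∀ M' ∈ M, ∀ h : M' ⟶ X, ∃ t : M' ⟶ U₀, t ≫ u = h

/-- The Ext-projective objects of `S`. -/
def ExtProj (S : Set C) : Set C := {D ∈ S | ∀ Z ∈ S, ext1Zero D Z}

/-- `M` is τ-rigid: `Ext¹(M, Fac M) = 0`. -/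
def TauRigid (M : Set C) : Prop := ∀ M₀ ∈ M, ∀ X ∈ Fac M, ext1Zero M₀ X

/-- `P` admits an exact sequence `P ⟶ Ma ⟶ Mb ⟶ 0` with `Ma, Mb ∈ M` and the
first map a left `M`-approximation. -/
def HasApproxSeq (M : Set C) (P : C) : Prop :=
  ∃ M₀ ∈ M, ∃ M₁ ∈ M, ∃ (m : P ⟶ M₀) (g : M₀ ⟶ M₁) (w : m ≫ g = 0),
    (ShortComplex.mk m g w).Exact ∧ Epi g ∧ IsLeftApprox M m

/-- `M` is a support τ-tilting subcategory. -/
def SupportTauTilting (M : Set C) : Prop :=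
  TauRigid M ∧ ∀ P : C, Projective P → HasApproxSeq M P

/-- `0 ⟶ X ⟶ Y ⟶ Z ⟶ 0` is a short exact sequence. -/
def SES {X Y Z : C} (f : X ⟶ Y) (g : Y ⟶ Z) : Prop :=
  ∃ w : f ≫ g = 0, (ShortComplex.mk f g w).Exact ∧ Mono f ∧ Epi g

/-- `U` is hereditary: `Ext²(U, −) = 0`. -/
def Hereditary1 (U : Set C) : Prop := ∀ U₀ ∈ U, ∀ X : C, ext2Zero U₀ X

/-- `U` is partial tilting. -/
def PartialTilting (U : Set C) : Prop :=
  Hereditary1 U ∧ ∀ U₀ ∈ U, ∀ U₁ ∈ U, ext1Zero U₀ U₁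

/-- `U` is tilting. -/
def Tilting (U : Set C) : Prop :=
  PartialTilting U ∧ ∀ P : C, Projective P →
    ∃ Ua ∈ U, ∃ Ub ∈ U, ∃ (i : P ⟶ Ua) (p : Ua ⟶ Ub), SES i p

/-- `U^⊥₁ = {X | Ext¹(U, X) = 0}`. -/
def Perp1 (U : Set C) : Set C := {X | ∀ U₀ ∈ U, ext1Zero U₀ X}

/-- `M` is closed under finite direct sums and direct summands. -/
def AdditivelyClosed (M : Set C) : Prop :=
  (∀ (n : ℕ) (f : Fin n → C), (∀ i, f i ∈ M) →
    haveI : HasBiproductsOfShape (Fin n) C := HasFiniteBiproducts.out n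
    (⨁ f) ∈ M) ∧
  (∀ M₀ ∈ M, ∀ (X : C) (r : M₀ ⟶ X) (s : X ⟶ M₀), s ≫ r = 𝟙 X → X ∈ M)

/-- The additive closure of a class of objects: direct summands of finite
direct sums of its objects. -/
def AddClosure (X : Set C) : Set C :=
  {Y | ∃ (n : ℕ) (f : Fin n → C), (∀ i, f i ∈ X) ∧
    haveI : HasBiproductsOfShape (Fin n) C := HasFiniteBiproducts.out n
    ∃ (r : (⨁ f) ⟶ Y) (s : Y ⟶ ⨁ f), s ≫ r = 𝟙 Y}


section Aux13

lemma subsingletonIffIsZero13 (M : ModuleCat ℤ) : Subsingleton M ↔ IsZero M := by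
  constructor
  · intro h; exact ModuleCat.isZero_of_subsingleton M
  · intro h
    have h1 : 𝟙 M = 0 := h.eq_of_src _ _
    have key : ∀ a : M, a = 0 := by
      intro a
      calc a = (𝟙 M) a := rfl
      _ = (0 : M ⟶ M) a := by rw [h1]
      _ = 0 := rfl
    exact ⟨fun a b => by rw [key a, key b]⟩

lemma biprodDescEq13 [HasBinaryBiproducts C] {A B Q : C} (f : A ⟶ Q) (g : B ⟶ Q) :
    biprod.desc f g = biprod.fst ≫ f + biprod.snd ≫ g := by
  apply biprod.hom_ext' <;> simp

lemma extnZeroIffExactAt13 (W X : C) (P : ProjectiveResolution W) (n : ℕ) :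
    Subsingleton (((Ext ℤ C n).obj (op W)).obj X) ↔
      (P.complex.linearYonedaObj ℤ X).ExactAt n := by
  rw [HomologicalComplex.exactAt_iff_isZero_homology, subsingletonIffIsZero13]
  exact ⟨fun h => IsZero.of_iso h (P.isoExt n X).symm, fun h => IsZero.of_iso h (P.isoExt n X)⟩

lemma exactAtIffConcrete13 (W X : C) (P : ProjectiveResolution W) (i j k : ℕ)
    (hij : (ComplexShape.up ℕ).prev j = i) (hjk : (ComplexShape.up ℕ).next j = k) :
    (P.complex.linearYonedaObj ℤ X).ExactAt j ↔
      ∀ (x : P.complex.X j ⟶ X), P.complex.d k j ≫ x = 0 →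
        ∃ y : P.complex.X i ⟶ X, P.complex.d j i ≫ y = x := by
  rw [HomologicalComplex.exactAt_iff' _ i j k hij hjk]
  rw [ShortComplex.moduleCat_exact_iff]
  constructor
  · intro h x hx
    obtain ⟨y, hy⟩ := h x hx
    exact ⟨y, hy⟩
  · intro h x hx
    obtain ⟨y, hy⟩ := h x hx
    exact ⟨y, hy⟩

/-- A syzygy package for `W`. -/
structure Syz13 (W : C) where
  P₀ : C
  P₁ : C
  Ω : C
  Ω₂ : C
  proj₀ : Projective P₀
  proj₁ : Projective P₁
  π : P₀ ⟶ W
  ι : Ω ⟶ P₀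
  e : P₁ ⟶ Ω
  ι₂ : Ω₂ ⟶ P₁
  epi_π : Epi π
  epi_e : Epi e
  mono_ι : Mono ι
  mono_ι₂ : Mono ι₂
  ι_π : ι ≫ π = 0
  ι₂_e : ι₂ ≫ e = 0
  ker_π : ∀ {A : C} (t : A ⟶ P₀), t ≫ π = 0 → ∃ s, s ≫ ι = t
  ker_e : ∀ {A : C} (t : A ⟶ P₁), t ≫ e = 0 → ∃ s, s ≫ ι₂ = t
  desc_π : ∀ {Q : C} (t : P₀ ⟶ Q), ι ≫ t = 0 → ∃ w : W ⟶ Q, π ≫ w = t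
  desc_e : ∀ {Q : C} (t : P₁ ⟶ Q), ι₂ ≫ t = 0 → ∃ w : Ω ⟶ Q, e ≫ w = t
  fact1 : ∀ X : C, ext1Zero W X ↔ ∀ g : Ω ⟶ X, ∃ G : P₀ ⟶ X, ι ≫ G = g
  fact2 : ∀ X : C, ext2Zero W X → ∀ g : Ω₂ ⟶ X, ∃ G : P₁ ⟶ X, ι₂ ≫ G = g

def mkSyz13 (W : C) : Syz13 W := by
  let P := ProjectiveResolution.of W
  let π : P.complex.X 0 ⟶ W := P.π.f 0
  haveI : Epi π := ProjectiveResolution.instEpiFNatπ P 0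
  have hd10π : P.complex.d 1 0 ≫ π = 0 := P.complex_d_comp_π_f_zero
  let e : P.complex.X 1 ⟶ kernel π := kernel.lift π (P.complex.d 1 0) hd10π
  have he : e ≫ kernel.ι π = P.complex.d 1 0 := kernel.lift_ι _ _ _
  have hd21e : P.complex.d 2 1 ≫ e = 0 := by
    rw [← cancel_mono (kernel.ι π), Category.assoc, he, zero_comp]
    exact P.complex.d_comp_d 2 1 0
  have hd21d10 : P.complex.d 2 1 ≫ P.complex.d 1 0 = 0 := P.complex.d_comp_d 2 1 0
  let e₂ : P.complex.X 2 ⟶ kernel (P.complex.d 1 0) :=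
    kernel.lift (P.complex.d 1 0) (P.complex.d 2 1) hd21d10
  have he₂ : e₂ ≫ kernel.ι (P.complex.d 1 0) = P.complex.d 2 1 := kernel.lift_ι _ _ _
  have hι₂e : kernel.ι (P.complex.d 1 0) ≫ e = 0 := by
    rw [← cancel_mono (kernel.ι π), Category.assoc, he, zero_comp]
    exact kernel.condition _
  have hepi_e : Epi e := by
    have h := P.exact₀
    rw [ShortComplex.exact_iff_epi_kernel_lift] at h
    exact h
  have hepi_e₂ : Epi e₂ := by
    have h := P.exact_succ 0
    rw [ShortComplex.exact_iff_epi_kernel_lift] at h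
    exact h
  have hd32e₂ : P.complex.d 3 2 ≫ e₂ = 0 := by
    rw [← cancel_mono (kernel.ι (P.complex.d 1 0)), Category.assoc, he₂, zero_comp]
    exact P.complex.d_comp_d 3 2 1
  refine
    { P₀ := P.complex.X 0
      P₁ := P.complex.X 1
      Ω := kernel π
      Ω₂ := kernel (P.complex.d 1 0)
      proj₀ := P.projective 0
      proj₁ := P.projective 1
      π := π
      ι := kernel.ι π
      e := e
      ι₂ := kernel.ι (P.complex.d 1 0)
      epi_π := inferInstance
      epi_e := hepi_e
      mono_ι := inferInstance
      mono_ι₂ := inferInstance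
      ι_π := kernel.condition π
      ι₂_e := hι₂e
      ker_π := fun t ht => ⟨kernel.lift π t ht, kernel.lift_ι _ _ _⟩
      ker_e := fun t ht => ?_
      desc_π := fun t ht => ⟨Abelian.epiDesc π t ht, Abelian.comp_epiDesc _ _ _⟩
      desc_e := fun t ht => ?_
      fact1 := fun X => ?_
      fact2 := fun X => ?_ }
  · -- ker_e
    have h1 : t ≫ P.complex.d 1 0 = 0 := by
      rw [← he, ← Category.assoc, ht, zero_comp]
    exact ⟨kernel.lift _ t h1, kernel.lift_ι _ _ _⟩
  · -- desc_e
    haveI := hepi_e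
    have h1 : kernel.ι e ≫ t = 0 := by
      have h2 : kernel.ι e ≫ P.complex.d 1 0 = 0 := by
        rw [← he, ← Category.assoc, kernel.condition, zero_comp]
      obtain ⟨s, hs⟩ : ∃ s, s ≫ kernel.ι (P.complex.d 1 0) = kernel.ι e :=
        ⟨kernel.lift _ _ h2, kernel.lift_ι _ _ _⟩
      rw [← hs, Category.assoc, ht, comp_zero]
    exact ⟨Abelian.epiDesc e t h1, Abelian.comp_epiDesc _ _ _⟩
  · -- fact1
    rw [show ext1Zero W X ↔ Subsingleton (((Ext ℤ C 1).obj (op W)).obj X) from Iff.rfl,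
      extnZeroIffExactAt13 W X P 1, exactAtIffConcrete13 W X P 0 1 2 (by simp) (by simp)]
    constructor
    · intro h g
      have hc : P.complex.d 2 1 ≫ (e ≫ g) = 0 := by
        rw [← Category.assoc, hd21e, zero_comp]
      obtain ⟨y, hy⟩ := h (e ≫ g) hc
      refine ⟨y, ?_⟩
      haveI := hepi_e
      rw [← cancel_epi e, ← Category.assoc, he]
      exact hy
    · intro h x hx
      -- show ι₂ ≫ x = 0 using exactness
      have hexact := P.exact_succ 0
      have hx0 : kernel.ι (P.complex.d 1 0) ≫ x = 0 := by
        obtain ⟨A', pr, hpr, a, ha⟩ := hexact.exact_up_to_refinements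
          (kernel.ι (P.complex.d 1 0)) (kernel.condition _)
        haveI := hpr
        rw [← cancel_epi pr, ← Category.assoc, ha, Category.assoc, hx, comp_zero, comp_zero]
      -- x factors through e
      have hkex : kernel.ι e ≫ x = 0 := by
        have h2 : kernel.ι e ≫ P.complex.d 1 0 = 0 := by
          rw [← he, ← Category.assoc, kernel.condition, zero_comp]
        obtain ⟨s, hs⟩ : ∃ s, s ≫ kernel.ι (P.complex.d 1 0) = kernel.ι e :=
          ⟨kernel.lift _ _ h2, kernel.lift_ι _ _ _⟩
        rw [← hs, Category.assoc, hx0, comp_zero]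
      haveI := hepi_e
      obtain ⟨G, hG⟩ := h (Abelian.epiDesc e x hkex)
      refine ⟨G, ?_⟩
      rw [← he, Category.assoc, hG, Abelian.comp_epiDesc]
  · -- fact2
    intro hX g
    rw [show ext2Zero W X ↔ Subsingleton (((Ext ℤ C 2).obj (op W)).obj X) from Iff.rfl,
      extnZeroIffExactAt13 W X P 2, exactAtIffConcrete13 W X P 1 2 3 (by simp) (by simp)] at hX
    have hc : P.complex.d 3 2 ≫ (e₂ ≫ g) = 0 := by
      rw [← Category.assoc, hd32e₂, zero_comp]
    obtain ⟨y, hy⟩ := hX (e₂ ≫ g) hc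
    refine ⟨y, ?_⟩
    haveI := hepi_e₂
    rw [← cancel_epi e₂, ← Category.assoc, he₂]
    exact hy

lemma SESKerFac13 {X Y Z : C} {f : X ⟶ Y} {g : Y ⟶ Z} (h : SES f g) {A : C}
    (t : A ⟶ Y) (ht : t ≫ g = 0) : ∃ s : A ⟶ X, s ≫ f = t := by
  obtain ⟨w, hex, hm, he⟩ := h
  haveI := hm
  have hlim := hex.fIsKernel
  obtain ⟨l, hl⟩ := KernelFork.IsLimit.lift' hlim t ht
  exact ⟨l, hl⟩

lemma SESCokerFac13 {X Y Z : C} {f : X ⟶ Y} {g : Y ⟶ Z} (h : SES f g) {A : C}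
    (t : Y ⟶ A) (ht : f ≫ t = 0) : ∃ s : Z ⟶ A, g ≫ s = t := by
  obtain ⟨w, hex, hm, he⟩ := h
  haveI := he
  have hcol := hex.gIsCokernel
  obtain ⟨l, hl⟩ := CokernelCofork.IsColimit.desc' hcol t ht
  exact ⟨l, hl⟩

lemma SESOfEpi13 {Y Z : C} (p : Y ⟶ Z) [Epi p] : SES (kernel.ι p) p := by
  refine ⟨kernel.condition p, ?_, inferInstance, inferInstance⟩
  exact ShortComplex.exact_of_f_is_kernel _ (kernelIsKernel p)

/-- L-iii : lifting along a SES when `Ext¹(Z, W) = 0`. -/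
lemma liftOfExt1Zero13 {X Y Z W : C} (u : X ⟶ Y) (v : Y ⟶ Z) (h : SES u v)
    (hext : ext1Zero Z W) (f : X ⟶ W) : ∃ t : Y ⟶ W, u ≫ t = f := by
  obtain ⟨hw, hex, hm, he⟩ := h
  haveI := hm; haveI := he
  let S := mkSyz13 Z
  haveI := S.proj₀
  let lam : S.P₀ ⟶ Y := Projective.factorThru S.π v
  have hlam : lam ≫ v = S.π := Projective.factorThru_comp _ _
  have h1 : (S.ι ≫ lam) ≫ v = 0 := by rw [Category.assoc, hlam, S.ι_π]
  obtain ⟨μ, hμ⟩ := SESKerFac13 ⟨hw, hex, hm, he⟩ (S.ι ≫ lam) h1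
  obtain ⟨η, hη⟩ := (S.fact1 W).1 hext (μ ≫ f)
  let ε : X ⊞ S.P₀ ⟶ Y := biprod.desc u lam
  have hεepi : Epi ε := by
    rw [Preadditive.epi_iff_cancel_zero]
    intro R q hq
    have hu : u ≫ q = 0 := by
      have := biprod.inl ≫= hq
      simpa [ε] using this
    have hl : lam ≫ q = 0 := by
      have := biprod.inr ≫= hq
      simpa [ε] using this
    obtain ⟨q', hq'⟩ := SESCokerFac13 ⟨hw, hex, hm, he⟩ q hu
    have h2 : S.π ≫ q' = 0 := by rw [← hlam, Category.assoc, hq', hl]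
    haveI := S.epi_π
    have h2' : q' = 0 := zero_of_epi_comp S.π h2
    rw [← hq', h2', comp_zero]
  let θ : X ⊞ S.P₀ ⟶ W := biprod.desc f η
  have hker : kernel.ι ε ≫ θ = 0 := by
    have hab : kernel.ι ε ≫ biprod.fst ≫ u + kernel.ι ε ≫ biprod.snd ≫ lam = 0 := by
      have h3' : kernel.ι ε ≫ (biprod.fst ≫ u + biprod.snd ≫ lam) = 0 := by
        rw [← biprodDescEq13]
        exact kernel.condition ε
      simpa only [Preadditive.comp_add] using h3'
    have hbπ : (kernel.ι ε ≫ biprod.snd) ≫ S.π = 0 := by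
      have h4 : kernel.ι ε ≫ biprod.snd ≫ lam = -(kernel.ι ε ≫ biprod.fst ≫ u) := by
        rw [eq_neg_iff_add_eq_zero, add_comm]; exact hab
      calc (kernel.ι ε ≫ biprod.snd) ≫ S.π
          = (kernel.ι ε ≫ biprod.snd) ≫ lam ≫ v := by rw [hlam]
        _ = kernel.ι ε ≫ biprod.snd ≫ lam ≫ v := by rw [Category.assoc]
        _ = (kernel.ι ε ≫ biprod.snd ≫ lam) ≫ v := by
              rw [Category.assoc (kernel.ι ε), Category.assoc biprod.snd]
        _ = (-(kernel.ι ε ≫ biprod.fst ≫ u)) ≫ v := by rw [h4]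
        _ = -((kernel.ι ε ≫ biprod.fst ≫ u) ≫ v) := by rw [Preadditive.neg_comp]
        _ = -(kernel.ι ε ≫ biprod.fst ≫ u ≫ v) := by
              rw [Category.assoc (kernel.ι ε), Category.assoc biprod.fst]
        _ = 0 := by rw [hw]; simp
    obtain ⟨c, hc⟩ := S.ker_π (kernel.ι ε ≫ biprod.snd) hbπ
    have h5 : (kernel.ι ε ≫ biprod.fst + c ≫ μ) ≫ u = 0 := by
      calc (kernel.ι ε ≫ biprod.fst + c ≫ μ) ≫ u
          = (kernel.ι ε ≫ biprod.fst) ≫ u + (c ≫ μ) ≫ u := by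
            rw [Preadditive.add_comp]
        _ = kernel.ι ε ≫ biprod.fst ≫ u + c ≫ μ ≫ u := by
            rw [Category.assoc, Category.assoc]
        _ = kernel.ι ε ≫ biprod.fst ≫ u + c ≫ S.ι ≫ lam := by rw [hμ]
        _ = kernel.ι ε ≫ biprod.fst ≫ u + (c ≫ S.ι) ≫ lam := by
            rw [Category.assoc c]
        _ = kernel.ι ε ≫ biprod.fst ≫ u + kernel.ι ε ≫ biprod.snd ≫ lam := by
            rw [hc, Category.assoc]
        _ = 0 := hab
    have h6 : kernel.ι ε ≫ biprod.fst + c ≫ μ = 0 := zero_of_comp_mono u h5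
    calc kernel.ι ε ≫ θ
        = kernel.ι ε ≫ (biprod.fst ≫ f + biprod.snd ≫ η) := by
          rw [show θ = biprod.fst ≫ f + biprod.snd ≫ η from biprodDescEq13 f η]
      _ = kernel.ι ε ≫ biprod.fst ≫ f + kernel.ι ε ≫ biprod.snd ≫ η := by
          rw [Preadditive.comp_add]
      _ = kernel.ι ε ≫ biprod.fst ≫ f + (c ≫ S.ι) ≫ η := by rw [hc, Category.assoc]
      _ = kernel.ι ε ≫ biprod.fst ≫ f + c ≫ S.ι ≫ η := by rw [Category.assoc c]
      _ = kernel.ι ε ≫ biprod.fst ≫ f + c ≫ μ ≫ f := by rw [hη]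
      _ = (kernel.ι ε ≫ biprod.fst) ≫ f + (c ≫ μ) ≫ f := by
          rw [Category.assoc, Category.assoc c]
      _ = (kernel.ι ε ≫ biprod.fst + c ≫ μ) ≫ f := by rw [Preadditive.add_comp]
      _ = 0 := by rw [h6, zero_comp]
  haveI := hεepi
  refine ⟨Abelian.epiDesc ε θ hker, ?_⟩
  have h8 : ε ≫ Abelian.epiDesc ε θ hker = θ := Abelian.comp_epiDesc _ _ _
  calc u ≫ Abelian.epiDesc ε θ hker
      = (biprod.inl ≫ ε) ≫ Abelian.epiDesc ε θ hker := by
        rw [show biprod.inl ≫ ε = u from by simp [ε]]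
    _ = biprod.inl ≫ θ := by rw [Category.assoc, h8]
    _ = f := by simp [θ]

/-- L-i. -/
lemma ext1ZeroKernel13 {W K Y Z : C} (k : K ⟶ Y) (p : Y ⟶ Z) (h : SES k p)
    (hsurj : ∀ f : W ⟶ Z, ∃ t : W ⟶ Y, t ≫ p = f)
    (hY : ext1Zero W Y) : ext1Zero W K := by
  obtain ⟨hw, hex, hm, he⟩ := h
  let S := mkSyz13 W
  apply (S.fact1 K).2
  intro g
  obtain ⟨G, hG⟩ := (S.fact1 Y).1 hY (g ≫ k)
  have h0 : S.ι ≫ (G ≫ p) = 0 := by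
    rw [← Category.assoc, hG, Category.assoc, hw, comp_zero]
  obtain ⟨wb, hwb⟩ := S.desc_π (G ≫ p) h0
  obtain ⟨wt, hwt⟩ := hsurj wb
  have h2 : (G - S.π ≫ wt) ≫ p = 0 := by
    rw [Preadditive.sub_comp, Category.assoc, hwt, hwb, sub_self]
  obtain ⟨H, hH⟩ := SESKerFac13 ⟨hw, hex, hm, he⟩ (G - S.π ≫ wt) h2
  refine ⟨H, ?_⟩
  haveI := hm
  rw [← cancel_mono k, Category.assoc, hH, Preadditive.comp_sub, hG, ← Category.assoc,
    S.ι_π, zero_comp, sub_zero]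

/-- L-ii. -/
lemma ext1ZeroCoker13 {W X Y Z : C} (a : X ⟶ Y) (b : Y ⟶ Z) (h : SES a b)
    (hY : ext1Zero W Y) (hX : ext2Zero W X) : ext1Zero W Z := by
  obtain ⟨hw, hex, hm, he⟩ := h
  haveI := he
  let S := mkSyz13 W
  apply (S.fact1 Z).2
  intro g
  haveI := S.proj₁
  let γ : S.P₁ ⟶ Y := Projective.factorThru (S.e ≫ g) b
  have hγ : γ ≫ b = S.e ≫ g := Projective.factorThru_comp _ _
  have h1 : (S.ι₂ ≫ γ) ≫ b = 0 := by
    rw [Category.assoc, hγ, ← Category.assoc, S.ι₂_e, zero_comp]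
  obtain ⟨hh, hha⟩ := SESKerFac13 ⟨hw, hex, hm, he⟩ (S.ι₂ ≫ γ) h1
  obtain ⟨H, hH⟩ := S.fact2 X hX hh
  have h2 : S.ι₂ ≫ (γ - H ≫ a) = 0 := by
    rw [Preadditive.comp_sub, ← Category.assoc, hH, hha, sub_self]
  obtain ⟨y, hy⟩ := S.desc_e (γ - H ≫ a) h2
  have hyb : S.e ≫ (y ≫ b) = S.e ≫ g := by
    rw [← Category.assoc, hy, Preadditive.sub_comp, hγ, Category.assoc, hw,
      comp_zero, sub_zero]
  have hyb' : y ≫ b = g := by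
    haveI := S.epi_e
    exact (cancel_epi S.e).1 hyb
  obtain ⟨Y', hY'⟩ := (S.fact1 Y).1 hY y
  exact ⟨Y' ≫ b, by rw [← Category.assoc, hY', hyb']⟩

/-- L-iv. -/
lemma ext1ZeroMiddle13 {W X Y Z : C} (u : X ⟶ Y) (v : Y ⟶ Z) (h : SES u v)
    (hX : ext1Zero X W) (hZ : ext1Zero Z W) : ext1Zero Y W := by
  obtain ⟨hw, hex, hm, he⟩ := h
  haveI := hm; haveI := he
  let S := mkSyz13 Y
  haveI := S.epi_π
  apply (S.fact1 W).2
  intro g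
  let n : kernel (S.π ≫ v) ⟶ S.P₀ := kernel.ι (S.π ≫ v)
  have hn : n ≫ (S.π ≫ v) = 0 := kernel.condition _
  have hj0 : S.ι ≫ (S.π ≫ v) = 0 := by rw [← Category.assoc, S.ι_π, zero_comp]
  let j : S.Ω ⟶ kernel (S.π ≫ v) := kernel.lift (S.π ≫ v) S.ι hj0
  have hjn : j ≫ n = S.ι := kernel.lift_ι _ _ _
  have h3 : (n ≫ S.π) ≫ v = 0 := by rw [Category.assoc]; exact hn
  obtain ⟨α, hα⟩ := SESKerFac13 ⟨hw, hex, hm, he⟩ (n ≫ S.π) h3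
  have hwj : j ≫ α = 0 := by
    rw [← cancel_mono u, Category.assoc, hα, ← Category.assoc, hjn, S.ι_π, zero_comp]
  have monoj : Mono j := by
    have : Mono (j ≫ n) := by rw [hjn]; exact S.mono_ι
    exact mono_of_mono j n
  have epiα : Epi α := by
    rw [epi_iff_surjective_up_to_refinements]
    intro A y
    obtain ⟨A', p', hp', x', hx'⟩ := surjective_up_to_refinements_of_epi S.π (y ≫ u)
    have hfac : x' ≫ (S.π ≫ v) = 0 := by
      rw [← Category.assoc, ← hx', Category.assoc, Category.assoc, hw, comp_zero, comp_zero]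
    let z := kernel.lift (S.π ≫ v) x' hfac
    have hz : z ≫ n = x' := kernel.lift_ι _ _ _
    refine ⟨A', p', hp', z, ?_⟩
    rw [← cancel_mono u]
    calc (p' ≫ y) ≫ u = p' ≫ y ≫ u := by rw [Category.assoc]
      _ = x' ≫ S.π := hx'
      _ = (z ≫ n) ≫ S.π := by rw [hz]
      _ = z ≫ n ≫ S.π := by rw [Category.assoc]
      _ = z ≫ α ≫ u := by rw [hα]
      _ = (z ≫ α) ≫ u := by rw [Category.assoc]
  have exactj : (ShortComplex.mk j α hwj).Exact := by
    rw [ShortComplex.exact_iff_exact_up_to_refinements]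
    intro A t ht
    have ht' : t ≫ α = 0 := ht
    have h4 : (t ≫ n) ≫ S.π = 0 := by
      calc (t ≫ n) ≫ S.π = t ≫ n ≫ S.π := by rw [Category.assoc]
        _ = t ≫ α ≫ u := by rw [hα]
        _ = (t ≫ α) ≫ u := by rw [Category.assoc]
        _ = 0 := by rw [ht', zero_comp]
    obtain ⟨c, hc⟩ := S.ker_π (t ≫ n) h4
    refine ⟨A, 𝟙 A, inferInstance, c, ?_⟩
    haveI : Mono n := inferInstanceAs (Mono (kernel.ι (S.π ≫ v)))
    have hcj : t = c ≫ j := by rw [← cancel_mono n, Category.assoc, hjn, hc]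
    rw [Category.id_comp]
    exact hcj
  have hSES1 : SES j α := ⟨hwj, exactj, monoj, epiα⟩
  obtain ⟨g', hg'⟩ := liftOfExt1Zero13 j α hSES1 hX g
  haveI : Epi (S.π ≫ v) := epi_comp _ _
  have hSES2 : SES n (S.π ≫ v) := SESOfEpi13 (S.π ≫ v)
  obtain ⟨G, hG⟩ := liftOfExt1Zero13 n (S.π ≫ v) hSES2 hZ g'
  exact ⟨G, by rw [← hjn, Category.assoc, hG, hg']⟩

/-- Splitting of a SES with vanishing Ext¹. -/
lemma sesSplit13 {K Y Z : C} (k : K ⟶ Y) (p : Y ⟶ Z) (h : SES k p)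
    (hext : ext1Zero Z K) : ∃ s : Z ⟶ Y, s ≫ p = 𝟙 Z := by
  obtain ⟨r, hr⟩ := liftOfExt1Zero13 k p h hext (𝟙 K)
  obtain ⟨hw, hex, hm, he⟩ := h
  haveI := he
  have h0 : k ≫ (𝟙 Y - r ≫ k) = 0 := by
    rw [Preadditive.comp_sub, Category.comp_id, ← Category.assoc, hr, Category.id_comp,
      sub_self]
  obtain ⟨s, hs⟩ := SESCokerFac13 ⟨hw, hex, hm, he⟩ (𝟙 Y - r ≫ k) h0
  refine ⟨s, ?_⟩
  rw [← cancel_epi p, ← Category.assoc, hs, Preadditive.sub_comp, Category.id_comp,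
    Category.assoc, hw, comp_zero, sub_zero, Category.comp_id]

/-- Ext¹ into each summand vanishes implies Ext¹ into the biproduct vanishes. -/
lemma ext1ZeroBiproduct13 {W : C} (n : ℕ) (f : Fin n → C)
    (hf : ∀ i, ext1Zero W (f i)) :
    haveI : HasBiproductsOfShape (Fin n) C := HasFiniteBiproducts.out n
    ext1Zero W (⨁ f) := by
  haveI : HasBiproductsOfShape (Fin n) C := HasFiniteBiproducts.out n
  let S := mkSyz13 W
  show ext1Zero W (⨁ f)
  apply (S.fact1 (⨁ f)).2
  intro g
  have key := fun i => (S.fact1 (f i)).1 (hf i) (g ≫ biproduct.π f i)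
  choose G hG using key
  refine ⟨biproduct.lift G, ?_⟩
  apply biproduct.hom_ext
  intro i
  rw [Category.assoc, biproduct.lift_π, hG i]

/-- Fac T is contained in T-perp. -/
lemma perpFac13 {T : Set C} (hher : Hereditary1 T)
    (hrig : ∀ A ∈ T, ∀ B ∈ T, ext1Zero A B) :
    ∀ A ∈ T, ∀ Z ∈ Fac T, ext1Zero A Z := by
  intro A hA Z hZ
  obtain ⟨n, f, hf, e, he⟩ := hZ
  haveI : HasBiproductsOfShape (Fin n) C := HasFiniteBiproducts.out n
  haveI : Epi e := he
  have hb : ext1Zero A (⨁ f) := ext1ZeroBiproduct13 n f (fun i => hrig A hA (f i) (hf i))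
  exact ext1ZeroCoker13 (kernel.ι e) e (SESOfEpi13 e) hb (hher A hA _)

/-- quotients of objects of T lie in Fac T. -/
lemma memFac13 {T : Set C} {A Y : C} (hA : A ∈ T) (q : A ⟶ Y) (hq : Epi q) :
    Y ∈ Fac T := by
  refine ⟨1, fun _ => A, fun _ => hA, ?_⟩
  haveI : HasBiproductsOfShape (Fin 1) C := HasFiniteBiproducts.out 1
  refine ⟨biproduct.π (fun _ : Fin 1 => A) 0 ≫ q, ?_⟩
  haveI : Epi (biproduct.π (fun _ : Fin 1 => A) 0) := by
    have h1 : biproduct.ι (fun _ : Fin 1 => A) 0 ≫ biproduct.π (fun _ : Fin 1 => A) 0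
        = 𝟙 A := by simp
    haveI : Epi (biproduct.ι (fun _ : Fin 1 => A) 0 ≫
        biproduct.π (fun _ : Fin 1 => A) 0) := by rw [h1]; infer_instance
    exact epi_of_epi (biproduct.ι (fun _ : Fin 1 => A) 0) (biproduct.π (fun _ : Fin 1 => A) 0)
  haveI := hq
  exact epi_comp _ _

end Aux13


theorem stmt13 [EnoughInjectives C] (T U : Set C) (hT : Tilting T)
    (hTcf : ∀ X : C, ∃ T₀ ∈ T, ∃ t : T₀ ⟶ X, IsRightApprox T t)
    (hTsummand : ∀ M₀ ∈ T, ∀ (X : C) (r : M₀ ⟶ X) (s : X ⟶ M₀), s ≫ r = 𝟙 X → X ∈ T)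
    (hU : TauRigid U) (hperp : Perp1 T ⊆ Perp1 U) :
    ∀ U₀ ∈ U, ∃ T₀ ∈ T, ∃ T₁ ∈ T, ∃ (f : U₀ ⟶ T₀) (p : T₀ ⟶ T₁),
      SES f p ∧ ∀ Z ∈ Fac T, ∀ u : U₀ ⟶ Z, ∃ t : T₀ ⟶ Z, f ≫ t = u := by
  obtain ⟨⟨hher, hrig⟩, htilt⟩ := hT
  intro U₀ hU₀
  -- projective cover of U₀
  set P := Projective.over U₀ with hP
  set gP : P ⟶ U₀ := Projective.π U₀ with hgP
  haveI : Epi gP := inferInstanceAs (Epi (Projective.π U₀))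
  obtain ⟨Ta, hTa, Tb, hTb, iP, qT, hses0⟩ := htilt P (inferInstanceAs (Projective (Projective.over U₀)))
  obtain ⟨hw0, hex0, hm0, he0⟩ := hses0
  haveI := hm0; haveI := he0
  -- the pushout E
  set φ : P ⟶ Ta ⊞ U₀ := biprod.lift iP (-gP) with hφ
  have hφfst : φ ≫ biprod.fst = iP := biprod.lift_fst _ _
  have hφsnd : φ ≫ biprod.snd = -gP := biprod.lift_snd _ _
  haveI : Mono φ := by
    have : Mono (φ ≫ biprod.fst) := by rw [hφfst]; exact hm0
    exact mono_of_mono φ biprod.fst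
  set E := cokernel φ with hE
  set πE : Ta ⊞ U₀ ⟶ E := cokernel.π φ with hπE
  set inTa : Ta ⟶ E := biprod.inl ≫ πE with hinTa
  set fE : U₀ ⟶ E := biprod.inr ≫ πE with hfE
  have hφπE : φ ≫ πE = 0 := cokernel.condition φ
  have hφeq : φ = iP ≫ biprod.inl - gP ≫ biprod.inr := by
    apply biprod.hom_ext
    · rw [hφfst, Preadditive.sub_comp, Category.assoc, Category.assoc, biprod.inl_fst,
        biprod.inr_fst, Category.comp_id, comp_zero, sub_zero]
    · rw [hφsnd, Preadditive.sub_comp, Category.assoc, Category.assoc, biprod.inl_snd,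
        biprod.inr_snd, Category.comp_id, comp_zero, zero_sub]
  have hkey : iP ≫ inTa = gP ≫ fE := by
    have h1 : (iP ≫ biprod.inl - gP ≫ biprod.inr) ≫ πE = 0 := by rw [← hφeq]; exact hφπE
    rw [Preadditive.sub_comp, Category.assoc, Category.assoc, sub_eq_zero] at h1
    exact h1
  have hvE0 : φ ≫ biprod.desc qT 0 = 0 := by
    rw [hφ, biprod.lift_desc, hw0, Preadditive.neg_comp, comp_zero, neg_zero, add_zero]
  set vE : E ⟶ Tb := cokernel.desc φ (biprod.desc qT 0) hvE0 with hvE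
  have hπvE : πE ≫ vE = biprod.desc qT 0 := cokernel.π_desc _ _ _
  have hfEvE : fE ≫ vE = 0 := by
    rw [hfE, Category.assoc, hπvE, biprod.inr_desc]
  have hinTavE : inTa ≫ vE = qT := by
    rw [hinTa, Category.assoc, hπvE, biprod.inl_desc]
  haveI hEvE : Epi vE := by
    haveI : Epi (inTa ≫ vE) := by rw [hinTavE]; exact he0
    exact epi_of_epi inTa vE
  -- fE is mono
  haveI hfEmono : Mono fE := by
    rw [Preadditive.mono_iff_cancel_zero]
    intro A t ht
    have h1 : (t ≫ (biprod.inr : U₀ ⟶ Ta ⊞ U₀)) ≫ cokernel.π φ = 0 := by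
      rw [Category.assoc]; exact ht
    have h2 := Abelian.monoLift_comp φ (t ≫ (biprod.inr : U₀ ⟶ Ta ⊞ U₀)) h1
    set sφ := Abelian.monoLift φ (t ≫ (biprod.inr : U₀ ⟶ Ta ⊞ U₀)) h1 with hsφ
    have h3 : sφ ≫ iP = 0 := by
      rw [← hφfst, ← Category.assoc, h2, Category.assoc, biprod.inr_fst, comp_zero]
    have h4 : sφ = 0 := zero_of_comp_mono iP h3
    have h5 : t ≫ (biprod.inr : U₀ ⟶ Ta ⊞ U₀) = 0 := by rw [← h2, h4, zero_comp]
    have h6 := h5 =≫ (biprod.snd : Ta ⊞ U₀ ⟶ U₀)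
    rwa [Category.assoc, biprod.inr_snd, Category.comp_id, zero_comp] at h6
  -- vE is the cokernel of fE : exactness, via refinements
  haveI : Epi πE := inferInstanceAs (Epi (cokernel.π φ))
  have hexE : (ShortComplex.mk fE vE hfEvE).Exact := by
    rw [ShortComplex.exact_iff_exact_up_to_refinements]
    intro A t ht
    have ht' : t ≫ vE = 0 := ht
    obtain ⟨A₁, p₁, hp₁, y, hy⟩ := surjective_up_to_refinements_of_epi πE t
    have h1 : (y ≫ biprod.fst) ≫ qT = 0 := by
      have h2 : y ≫ πE ≫ vE = 0 := by
        rw [← Category.assoc, ← hy, Category.assoc, ht', comp_zero]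
      rw [hπvE, biprodDescEq13, Preadditive.comp_add] at h2
      have h3 : y ≫ biprod.fst ≫ qT = 0 := by simpa using h2
      rwa [← Category.assoc] at h3
    obtain ⟨A₂, p₂, hp₂, z, hz⟩ := hex0.exact_up_to_refinements (y ≫ biprod.fst) h1
    haveI := hp₁; haveI := hp₂
    refine ⟨A₂, p₂ ≫ p₁, epi_comp _ _, z ≫ gP + p₂ ≫ y ≫ biprod.snd, ?_⟩
    have hytotal : y = (y ≫ biprod.fst) ≫ biprod.inl + (y ≫ biprod.snd) ≫ biprod.inr := by
      apply biprod.hom_ext <;> simp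
    calc (p₂ ≫ p₁) ≫ t = p₂ ≫ p₁ ≫ t := by rw [Category.assoc]
      _ = p₂ ≫ y ≫ πE := by rw [hy]
      _ = p₂ ≫ ((y ≫ biprod.fst) ≫ biprod.inl + (y ≫ biprod.snd) ≫ biprod.inr) ≫ πE := by
            rw [← hytotal]
      _ = (p₂ ≫ y ≫ biprod.fst) ≫ (biprod.inl ≫ πE)
            + (p₂ ≫ y ≫ biprod.snd) ≫ (biprod.inr ≫ πE) := by
            simp only [Preadditive.add_comp, Preadditive.comp_add, Category.assoc]
      _ = (p₂ ≫ y ≫ biprod.fst) ≫ inTa + (p₂ ≫ y ≫ biprod.snd) ≫ fE := by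
            rw [← hinTa, ← hfE]
      _ = ((z ≫ iP) ≫ inTa) + (p₂ ≫ y ≫ biprod.snd) ≫ fE := by
            rw [hz]
      _ = (z ≫ gP) ≫ fE + (p₂ ≫ y ≫ biprod.snd) ≫ fE := by
            rw [Category.assoc, hkey]
            simp only [Category.assoc]
      _ = (z ≫ gP + p₂ ≫ y ≫ biprod.snd) ≫ fE := by rw [Preadditive.add_comp]
  have hsesE : SES fE vE := ⟨hfEvE, hexE, hfEmono, hEvE⟩
  -- inTa is an epimorphism
  have hinTaepi : Epi inTa := by
    rw [Preadditive.epi_iff_cancel_zero]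
    intro R q hq
    have h1 : biprod.inl ≫ πE ≫ q = 0 := by
      rw [← Category.assoc, ← hinTa]; exact hq
    have h3 : (iP ≫ inTa) ≫ q = 0 := by
      rw [Category.assoc, hq, comp_zero]
    have h4 : gP ≫ (fE ≫ q) = 0 := by
      rw [← Category.assoc, ← hkey]; exact h3
    have h5 : fE ≫ q = 0 := zero_of_epi_comp gP h4
    have h6 : biprod.inr ≫ πE ≫ q = 0 := by
      rw [← Category.assoc, ← hfE]; exact h5
    have h7 : πE ≫ q = 0 := by
      apply biprod.hom_ext'
      · rw [comp_zero]; exact h1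
      · rw [comp_zero]; exact h6
    exact zero_of_epi_comp πE h7
  -- E lies in Fac T
  have hEFac : E ∈ Fac T := memFac13 hTa inTa hinTaepi
  -- right T-approximation of E
  obtain ⟨T₀, hT₀, p, hp⟩ := hTcf E
  obtain ⟨t₀, ht₀⟩ := hp Ta hTa inTa
  haveI hpepi : Epi p := by
    haveI : Epi (t₀ ≫ p) := by rw [ht₀]; exact hinTaepi
    exact epi_of_epi t₀ p
  have hsesK : SES (kernel.ι p) p := SESOfEpi13 p
  have hKperp : ∀ A ∈ T, ext1Zero A (kernel p) := by
    intro A hA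
    exact ext1ZeroKernel13 (kernel.ι p) p hsesK (fun f' => hp A hA f') (hrig A hA T₀ hT₀)
  have hKperpU : kernel p ∈ Perp1 U := hperp hKperp
  have hextUK : ext1Zero U₀ (kernel p) := hKperpU U₀ hU₀
  have hextTbK : ext1Zero Tb (kernel p) := hKperp Tb hTb
  have hextEK : ext1Zero E (kernel p) := ext1ZeroMiddle13 fE vE hsesE hextUK hextTbK
  obtain ⟨sp, hsp⟩ := sesSplit13 (kernel.ι p) p hsesK hextEK
  have hET : E ∈ T := hTsummand T₀ hT₀ E p sp hsp
  refine ⟨E, hET, Tb, hTb, fE, vE, hsesE, ?_⟩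
  intro Z hZ u
  have hTbZ : ext1Zero Tb Z := perpFac13 hher hrig Tb hTb Z hZ
  exact liftOfExt1Zero13 fE vE hsesE hTbZ u
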